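/- There do not exist a natural number s ≥ 1, a vector β ∈ ℝ^s, a matrix B ∈ ℝ^{s×s}, and real numbers a, b, e such that, writing 𝟙 ∈ ℝ^s for the all-ones vector, all four of the following equations hold simultaneously: (βᵀ𝟙)²·a = 1; (βᵀ𝟙)·(βᵀB B𝟙)·b = 0; (βᵀB𝟙)²·b = 1/2; and (βᵀB B𝟙)²·e = 1/6. -/
import Mathlib


open Matrix

theorem stmt16 :
    ¬ ∃ (s : ℕ) (_ : 1 ≤ s) (β : Fin s → ℝ) (B : Matrix (Fin s) (Fin s) ℝ) (a b e : ℝ),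
      (β ⬝ᵥ (1 : Fin s → ℝ)) ^ 2 * a = 1 ∧
      (β ⬝ᵥ (1 : Fin s → ℝ)) * (β ⬝ᵥ (B *ᵥ (B *ᵥ 1))) * b = 0 ∧
      (β ⬝ᵥ (B *ᵥ 1)) ^ 2 * b = 1/2 ∧
      (β ⬝ᵥ (B *ᵥ (B *ᵥ 1))) ^ 2 * e = 1/6 := by
  rintro ⟨s, hs, β, B, a, b, e, h1, h2, h3, h4⟩
  set x := β ⬝ᵥ (1 : Fin s → ℝ)
  set z := β ⬝ᵥ (B *ᵥ (B *ᵥ 1))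
  have hx : x ≠ 0 := by intro h; rw [h] at h1; norm_num at h1
  have hb : b ≠ 0 := by rintro rfl; norm_num at h3
  have hz : z = 0 := by
    rcases mul_eq_zero.mp h2 with h | h
    · rcases mul_eq_zero.mp h with h | h
      · exact absurd h hx
      · exact h
    · exact absurd h hb
  rw [hz] at h4; norm_num at h4
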